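/- arXiv:1612.02476 — 12 statements merged into one kernel-verified Lean document; each statement's English description precedes it below -/
import Mathlib

section
/- Let R be a commutative ring, I an ideal of R, M an R-module, and P an I-primary submodule of M. If (P : M)P ⊄ IP (i.e. the submodule (P : M)•P is not contained in I•P), then P is a primary submodule of M. -/
/-- `P` is an `I`-primary submodule of `M`: `P` is proper and whenever
`r • m ∈ P \ I • P`, either `m ∈ P` or `r ∈ √(P : M)`. -/
def IsIPrimary {R : Type*} [CommRing R] {M : Type*} [AddCommGroup M] [Module R M]
    (I : Ideal R) (P : Submodule R M) : Prop :=
  P ≠ ⊤ ∧ ∀ r : R, ∀ m : M, r • m ∈ P → r • m ∉ I • P →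
    m ∈ P ∨ r ∈ (P.colon ⊤).radical

/-- `P` is a primary submodule of `M`. -/
def IsPrimarySubmodule {R : Type*} [CommRing R] {M : Type*} [AddCommGroup M] [Module R M]
    (P : Submodule R M) : Prop :=
  P ≠ ⊤ ∧ ∀ r : R, ∀ m : M, r • m ∈ P →
    m ∈ P ∨ r ∈ (P.colon ⊤).radical

theorem stmt0 {R : Type*} [CommRing R] {M : Type*} [AddCommGroup M] [Module R M]
    (I : Ideal R) (P : Submodule R M)
    (hP : IsIPrimary I P)
    (h : ¬ (P.colon ⊤ • P ≤ I • P)) :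
    IsPrimarySubmodule P := by
  obtain ⟨hne, hprim⟩ := hP
  refine ⟨hne, fun r m hrm => ?_⟩
  by_cases hIP : r • m ∈ I • P
  · -- rm ∈ IP
    by_cases hrP : ∀ p ∈ P, r • p ∈ I • P
    · by_cases hcm : ∀ a ∈ P.colon ⊤, a • m ∈ I • P
      · -- pick a ∈ (P:M), p ∈ P with a•p ∉ IP
        rw [Submodule.smul_le] at h
        push_neg at h
        obtain ⟨a, ha, p, hp, hap⟩ := h
        have hap' : a • p ∈ P := Submodule.mem_colon.mp ha p trivial
        have hmem : (r + a) • (m + p) ∈ P := by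
          have : (r + a) • (m + p) = r • m + r • p + (a • m + a • p) := by
            simp [add_smul, smul_add]; abel
          rw [this]
          exact Submodule.add_mem _
            (Submodule.add_mem _ (Submodule.smul_le_right hIP)
              (Submodule.smul_mem _ _ hp))
            (Submodule.add_mem _ (Submodule.mem_colon.mp ha m trivial) hap')
        have hnmem : (r + a) • (m + p) ∉ I • P := by
          intro hc
          apply hap
          have : a • p = (r + a) • (m + p) - (r • m + r • p + a • m) := by
            simp [add_smul, smul_add]; abel
          rw [this]
          exact Submodule.sub_mem _ hc
            (Submodule.add_mem _ (Submodule.add_mem _ hIP (hrP p hp)) (hcm a ha))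
        rcases hprim (r + a) (m + p) hmem hnmem with hmp | hra
        · left
          have := Submodule.sub_mem _ hmp hp
          simpa using this
        · right
          have : r = (r + a) - a := by ring
          rw [this]
          exact Ideal.sub_mem _ hra (Ideal.le_radical ha)
      · push_neg at hcm
        obtain ⟨a, ha, ham⟩ := hcm
        have hmem : (r + a) • m ∈ P :=
          add_smul r a m ▸ Submodule.add_mem _ hrm (Submodule.mem_colon.mp ha m trivial)
        have hnmem : (r + a) • m ∉ I • P := by
          intro hc
          apply ham
          have : a • m = (r + a) • m - r • m := by rw [add_smul]; abel
          rw [this]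
          exact Submodule.sub_mem _ hc hIP
        rcases hprim (r + a) m hmem hnmem with hm | hra
        · exact Or.inl hm
        · right
          have : r = (r + a) - a := by ring
          rw [this]
          exact Ideal.sub_mem _ hra (Ideal.le_radical ha)
    · push_neg at hrP
      obtain ⟨p, hp, hrp⟩ := hrP
      have hmem : r • (m + p) ∈ P := by
        rw [smul_add]
        exact Submodule.add_mem _ hrm (Submodule.smul_mem _ _ hp)
      have hnmem : r • (m + p) ∉ I • P := by
        intro hc
        apply hrp
        have : r • p = r • (m + p) - r • m := by rw [smul_add]; abel
        rw [this]
        exact Submodule.sub_mem _ hc hIP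
      rcases hprim r (m + p) hmem hnmem with hmp | hr
      · left
        have := Submodule.sub_mem _ hmp hp
        simpa using this
      · exact Or.inr hr
  · exact hprim r m hrm hIP
end

section
/- Let R be a commutative ring, I an ideal of R, M an R-module, and P an I-primary submodule of M. If N is a submodule of M with N ⊆ P, then the quotient submodule P/N is an I-primary submodule of the R-module M/N. -/
theorem stmt3 {R : Type*} [CommRing R] {M : Type*} [AddCommGroup M] [Module R M]
    (I : Ideal R) (P N : Submodule R M)
    (hP : IsIPrimary I P) (hNP : N ≤ P) :
    IsIPrimary I (P.map N.mkQ) := by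
  obtain ⟨hne, hprim⟩ := hP
  have hker : LinearMap.ker N.mkQ = N := N.ker_mkQ
  have hcomap : (P.map N.mkQ).comap N.mkQ = P := by
    rw [Submodule.comap_map_eq, hker, sup_eq_left.mpr hNP]
  constructor
  · intro h
    apply hne
    rw [eq_top_iff]
    intro m _
    have : N.mkQ m ∈ P.map N.mkQ := h ▸ Submodule.mem_top
    rw [← hcomap]
    exact this
  · intro r x hx hnx
    obtain ⟨m, rfl⟩ := N.mkQ_surjective x
    have hm : r • m ∈ P := by
      have h2 : N.mkQ (r • m) ∈ P.map N.mkQ := by rw [map_smul]; exact hx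
      rwa [← hcomap]
    have hnm : r • m ∉ I • P := by
      intro h
      apply hnx
      have : N.mkQ (r • m) ∈ (I • P).map N.mkQ := Submodule.mem_map_of_mem h
      rw [Submodule.map_smul''] at this
      simpa using this
    rcases hprim r m hm hnm with h | h
    · exact Or.inl (Submodule.mem_map_of_mem h)
    · refine Or.inr (Ideal.radical_mono ?_ h)
      intro s hs
      rw [Submodule.mem_colon] at hs ⊢
      intro y _
      obtain ⟨z, rfl⟩ := N.mkQ_surjective y
      rw [← map_smul]
      exact Submodule.mem_map_of_mem (hs z (by simp))
end

section
/- Let R be a commutative ring, I an ideal of R, M an R-module, and P an I-primary submodule of M. Let S be a multiplicatively closed subset of R such that S⁻¹P ≠ S⁻¹M and S⁻¹(IP) ⊆ (S⁻¹I)(S⁻¹P). Then S⁻¹P is an (S⁻¹I)-primary submodule of the S⁻¹R-module S⁻¹M. -/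
theorem stmt4 {R : Type*} [CommRing R] {M : Type*} [AddCommGroup M] [Module R M]
    (I : Ideal R) (P : Submodule R M) (S : Submonoid R)
    (hP : IsIPrimary I P)
    (hproper : P.localized S ≠ ⊤)
    (hIP : (I • P).localized S ≤
      (I.map (algebraMap R (Localization S))) • (P.localized S)) :
    IsIPrimary (I.map (algebraMap R (Localization S))) (P.localized S) := by
  classical
  set f := LocalizedModule.mkLinearMap S M with hf
  refine ⟨hproper, fun r' m' hmem hnot => ?_⟩
  obtain ⟨⟨r, s⟩, rfl⟩ := IsLocalization.mk'_surjective S r'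
  obtain ⟨⟨m, t⟩, rfl⟩ := IsLocalizedModule.mk'_surjective S f m'
  simp only [Function.uncurry] at hmem hnot ⊢
  rw [IsLocalizedModule.mk'_smul_mk'] at hmem hnot
  obtain ⟨p, hp, u, hu⟩ := hmem
  rw [IsLocalizedModule.mk'_eq_mk'_iff] at hu
  obtain ⟨c, hc⟩ := hu
  -- hc : c • u • (r • m) = c • (s * t) • p
  have key : ((c : R) * (u : R) * r) • m ∈ P := by
    have h1 : ((c : R) * (u : R) * r) • m = c • u • (r • m) := by
      simp [Submonoid.smul_def, smul_smul, mul_assoc]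
    rw [h1, hc, Submonoid.smul_def, Submonoid.smul_def, smul_smul]
    exact P.smul_mem _ hp
  by_cases hin : ((c : R) * (u : R) * r) • m ∈ I • P
  · exfalso
    apply hnot
    apply hIP
    have heq : ((c * u : S) : R) • (r • m) = ((c : R) * (u : R) * r) • m := by
      simp [smul_smul, mul_assoc]
    refine ⟨(c * u : S) • (r • m), ?_, (c * u) * (s * t), ?_⟩
    · rw [Submonoid.smul_def, heq]; exact hin
    · exact IsLocalizedModule.mk'_cancel_left f (r • m) (c * u) (s * t)
  · rcases hP.2 _ m key hin with hm | hrad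
    · exact Or.inl ⟨m, hm, t, rfl⟩
    · right
      obtain ⟨n, hn⟩ := hrad
      have hmap : algebraMap R (Localization S) ((c : R) * (u : R) * r) ∈
          ((P.localized S).colon ⊤).radical := by
        refine ⟨n, ?_⟩
        rw [← map_pow]
        rw [Submodule.mem_colon]
        intro x _
        obtain ⟨⟨m', t'⟩, rfl⟩ := IsLocalizedModule.mk'_surjective S f x
        simp only [Function.uncurry]
        rw [algebraMap_smul, ← IsLocalizedModule.mk'_smul]
        exact ⟨_, Submodule.mem_colon.mp hn m' trivial, t', rfl⟩
      have heq2 : IsLocalization.mk' (Localization S) r s =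
          IsLocalization.mk' (Localization S) 1 (s * (c * u)) *
            algebraMap R (Localization S) ((c : R) * (u : R) * r) := by
        rw [← IsLocalization.mk'_one (M := S), ← IsLocalization.mk'_mul, one_mul, mul_one]
        rw [show (c : R) * (u : R) * r = r * ((c * u : S) : R) by push_cast; ring]
        exact (IsLocalization.mk'_cancel r s (c * u)).symm
      rw [heq2]
      exact Ideal.mul_mem_left _ _ hmap
end

section
/- Let R₁, R₂ be commutative rings, M₁ an R₁-module, M₂ an R₂-module, and consider the ring R = R₁ × R₂ and the R-module M = M₁ × M₂. Let I₁, I₂ be ideals of R₁ and R₂ respectively and let I = I₁ × I₂ be the corresponding ideal of R. If P₁ is an I₁-primary submodule of M₁ and I₂M₂ = M₂, then P₁ × M₂ is an I-primary submodule of M. -/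
section Prod

variable {R₁ R₂ : Type*} [CommRing R₁] [CommRing R₂]
variable {M₁ M₂ : Type*} [AddCommGroup M₁] [AddCommGroup M₂]
variable [Module R₁ M₁] [Module R₂ M₂]

/-- `M₁` as a module over `R₁ × R₂`, via the first projection. -/
noncomputable local instance mod1 : Module (R₁ × R₂) M₁ :=
  Module.compHom M₁ (RingHom.fst R₁ R₂)

/-- `M₂` as a module over `R₁ × R₂`, via the second projection. -/
noncomputable local instance mod2 : Module (R₁ × R₂) M₂ :=
  Module.compHom M₂ (RingHom.snd R₁ R₂)

/-- The submodule `P₁ × M₂` of the `(R₁ × R₂)`-module `M₁ × M₂`. -/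
noncomputable def prodWithTop (P₁ : Submodule R₁ M₁) :
    Submodule (R₁ × R₂) (M₁ × M₂) where
  carrier := {p : M₁ × M₂ | p.1 ∈ P₁}
  add_mem' := fun ha hb => P₁.add_mem ha hb
  zero_mem' := P₁.zero_mem
  smul_mem' := fun c _x hx => P₁.smul_mem c.1 hx

theorem stmt8 (I₁ : Ideal R₁) (I₂ : Ideal R₂)
    (P₁ : Submodule R₁ M₁)
    (hP₁ : IsIPrimary I₁ P₁)
    (hI₂ : I₂ • (⊤ : Submodule R₂ M₂) = ⊤) :
    IsIPrimary (I₁.prod I₂) (prodWithTop (M₂ := M₂) P₁) := by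
  obtain ⟨hne, hprim⟩ := hP₁
  have key : ∀ p : M₁ × M₂,
      p ∈ (I₁.prod I₂) • (prodWithTop (R₂ := R₂) (M₂ := M₂) P₁) ↔ p.1 ∈ I₁ • P₁ := by
    intro p
    constructor
    · intro hp
      refine Submodule.smul_induction_on hp ?_ ?_
      · intro r hr n hn
        exact Submodule.smul_mem_smul hr.1 hn
      · intro x y hx hy
        exact Submodule.add_mem _ hx hy
    · intro hp
      have h1 : ((p.1, (0 : M₂)) : M₁ × M₂) ∈ (I₁.prod I₂) • (prodWithTop (R₂ := R₂) (M₂ := M₂) P₁) := by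
        refine Submodule.smul_induction_on hp ?_ ?_
        · intro r hr n hn
          have : ((r • n, (0 : M₂)) : M₁ × M₂) =
              ((r, (0 : R₂)) : R₁ × R₂) • ((n, (0 : M₂)) : M₁ × M₂) := by
            simp [Prod.smul_def]
            rfl
          rw [this]
          exact Submodule.smul_mem_smul ⟨hr, I₂.zero_mem⟩ hn
        · intro x y hx hy
          have : (((x + y : M₁), (0 : M₂)) : M₁ × M₂) =
              ((x, (0 : M₂)) : M₁ × M₂) + ((y, (0 : M₂)) : M₁ × M₂) := by simp
          rw [this]
          exact Submodule.add_mem _ hx hy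
      have h2 : (((0 : M₁), p.2) : M₁ × M₂) ∈ (I₁.prod I₂) • (prodWithTop (R₂ := R₂) (M₂ := M₂) P₁) := by
        have hp2 : p.2 ∈ I₂ • (⊤ : Submodule R₂ M₂) := by rw [hI₂]; trivial
        refine Submodule.smul_induction_on hp2 ?_ ?_
        · intro r hr n _
          have : (((0 : M₁), r • n) : M₁ × M₂) =
              (((0 : R₁), r) : R₁ × R₂) • (((0 : M₁), n) : M₁ × M₂) := by
            simp [Prod.smul_def]
            rfl
          rw [this]
          exact Submodule.smul_mem_smul ⟨I₁.zero_mem, hr⟩ P₁.zero_mem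
        · intro x y hx hy
          have : (((0 : M₁), x + y) : M₁ × M₂) =
              (((0 : M₁), x) : M₁ × M₂) + (((0 : M₁), y) : M₁ × M₂) := by simp
          rw [this]
          exact Submodule.add_mem _ hx hy
      have : p = ((p.1, (0 : M₂)) : M₁ × M₂) + (((0 : M₁), p.2) : M₁ × M₂) := by simp
      rw [this]
      exact Submodule.add_mem _ h1 h2
  constructor
  · intro htop
    apply hne
    rw [Submodule.eq_top_iff']
    intro m
    have : ((m, (0 : M₂)) : M₁ × M₂) ∈ prodWithTop (R₂ := R₂) (M₂ := M₂) P₁ := by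
      rw [htop]; trivial
    exact this
  · rintro r m hrm hnrm
    have h1 : r.1 • m.1 ∈ P₁ := hrm
    have h2 : r.1 • m.1 ∉ I₁ • P₁ := by
      intro h
      exact hnrm ((key (r • m)).mpr h)
    rcases hprim r.1 m.1 h1 h2 with hm | hr
    · exact Or.inl hm
    · right
      rw [Ideal.mem_radical_iff] at hr ⊢
      obtain ⟨n, hn⟩ := hr
      refine ⟨n, ?_⟩
      rw [Submodule.mem_colon] at hn ⊢
      intro p _
      show (r ^ n).1 • p.1 ∈ P₁
      rw [Prod.pow_fst]
      exact hn p.1 trivial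

end Prod
end

section
/- Let R be a commutative ring, I an ideal of R, M an R-module, and P a proper submodule of M. Then P is an I-primary submodule of M if and only if the quotient submodule P/IP is a 0-primary (weakly primary) submodule of the R-module M/IP, i.e. for all r ∈ R and x ∈ M/IP, 0 ≠ rx ∈ P/IP implies x ∈ P/IP or r ∈ √(P/IP : M/IP). -/
/-- `Q` is a `0`-primary (weakly primary) submodule of `M`. -/
def IsWeaklyPrimary {R : Type*} [CommRing R] {M : Type*} [AddCommGroup M] [Module R M]
    (Q : Submodule R M) : Prop :=
  Q ≠ ⊤ ∧ ∀ r : R, ∀ m : M, r • m ∈ Q → r • m ≠ 0 →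
    m ∈ Q ∨ r ∈ (Q.colon ⊤).radical

theorem stmt9 {R : Type*} [CommRing R] {M : Type*} [AddCommGroup M] [Module R M]
    (I : Ideal R) (P : Submodule R M) (hproper : P ≠ ⊤) :
    IsIPrimary I P ↔ IsWeaklyPrimary (P.map (I • P).mkQ) := by
  have hle : I • P ≤ P := Submodule.smul_le_right
  have hker : LinearMap.ker (I • P).mkQ = I • P := Submodule.ker_mkQ _
  have hcomap : (P.map (I • P).mkQ).comap (I • P).mkQ = P := by
    rw [Submodule.comap_map_eq, hker, sup_eq_left.mpr hle]
  have hmem : ∀ m : M, (I • P).mkQ m ∈ P.map (I • P).mkQ ↔ m ∈ P := by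
    intro m
    constructor
    · intro h; rw [← hcomap]; exact h
    · intro h; exact Submodule.mem_map_of_mem h
  have hcolon : (P.map (I • P).mkQ).colon ⊤ = P.colon ⊤ := by
    ext r
    simp only [Submodule.mem_colon]
    constructor
    · intro h m _
      have := h ((I • P).mkQ m) trivial
      rw [← LinearMap.map_smul, hmem] at this
      exact this
    · intro h x _
      obtain ⟨m, rfl⟩ := Submodule.mkQ_surjective _ x
      rw [← LinearMap.map_smul]
      exact Submodule.mem_map_of_mem (h m trivial)
  have hproper' : P.map (I • P).mkQ ≠ ⊤ := by
    intro h
    apply hproper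
    rw [eq_top_iff]
    intro m _
    rw [← hmem]
    rw [h]; trivial
  constructor
  · rintro ⟨-, hP⟩
    refine ⟨hproper', ?_⟩
    intro r x hx hx0
    obtain ⟨m, rfl⟩ := Submodule.mkQ_surjective _ x
    rw [← LinearMap.map_smul] at hx hx0
    have h1 : r • m ∈ P := (hmem _).mp hx
    have h2 : r • m ∉ I • P := by
      intro h
      exact hx0 ((Submodule.Quotient.mk_eq_zero _).mpr h)
    rcases hP r m h1 h2 with h | h
    · exact Or.inl (Submodule.mem_map_of_mem h)
    · rw [hcolon]; exact Or.inr h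
  · rintro ⟨-, hQ⟩
    refine ⟨hproper, ?_⟩
    intro r m h1 h2
    have hx : (I • P).mkQ (r • m) ∈ P.map (I • P).mkQ := Submodule.mem_map_of_mem h1
    have hx0 : (I • P).mkQ (r • m) ≠ 0 := by
      intro h
      exact h2 ((Submodule.Quotient.mk_eq_zero _).mp h)
    rw [LinearMap.map_smul] at hx hx0
    rcases hQ r _ hx hx0 with h | h
    · exact Or.inl ((hmem m).mp h)
    · rw [hcolon] at h; exact Or.inr h
end

section
/- Let R be a commutative ring, I an ideal of R, M an R-module, and P a proper submodule of M. Then P is an I-primary submodule of M if and only if for every ideal J of R and every submodule N of M such that JN ⊆ P and JN ⊄ IP (i.e. the submodule J•N is contained in P but not contained in I•P), one has J ⊆ √(P : M) or N ⊆ P. -/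
theorem stmt10 {R : Type*} [CommRing R] {M : Type*} [AddCommGroup M] [Module R M]
    (I : Ideal R) (P : Submodule R M) (hproper : P ≠ ⊤) :
    IsIPrimary I P ↔
      ∀ (J : Ideal R) (N : Submodule R M), J • N ≤ P → ¬ (J • N ≤ I • P) →
        J ≤ (P.colon ⊤).radical ∨ N ≤ P := by
  constructor
  · rintro ⟨-, hP⟩ J N hJN hJNI
    by_contra hcon
    push_neg at hcon
    obtain ⟨hJ, hN⟩ := hcon
    obtain ⟨r, hrJ, hr⟩ := SetLike.not_le_iff_exists.mp hJ
    obtain ⟨m, hmN, hm⟩ := SetLike.not_le_iff_exists.mp hN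
    -- key1: j ∉ rad, n ∉ P implies j•n ∈ I•P
    have key1 : ∀ j ∈ J, j ∉ (P.colon ⊤).radical → ∀ n ∈ N, n ∉ P → j • n ∈ I • P := by
      intro j hj hjrad n hn hnP
      by_contra h
      rcases hP j n (hJN (Submodule.smul_mem_smul hj hn)) h with h1 | h1
      · exact hnP h1
      · exact hjrad h1
    -- key3: n ∉ P implies j•n ∈ I•P for all j ∈ J
    have key3 : ∀ j ∈ J, ∀ n ∈ N, n ∉ P → j • n ∈ I • P := by
      intro j hj n hn hnP
      by_cases hjrad : j ∈ (P.colon ⊤).radical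
      · have hjr : j + r ∉ (P.colon ⊤).radical := by
          intro h
          have : r = (j + r) - j := by ring
          exact hr (this ▸ Ideal.sub_mem _ h hjrad)
        have h1 := key1 (j + r) (J.add_mem hj hrJ) hjr n hn hnP
        have h2 := key1 r hrJ hr n hn hnP
        have : j • n = (j + r) • n - r • n := by rw [add_smul]; abel
        rw [this]
        exact Submodule.sub_mem _ h1 h2
      · exact key1 j hj hjrad n hn hnP
    -- key: all j ∈ J, n ∈ N
    have key : ∀ j ∈ J, ∀ n ∈ N, j • n ∈ I • P := by
      intro j hj n hn
      by_cases hnP : n ∈ P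
      · have hnm : n + m ∉ P := fun h => hm (by simpa using P.sub_mem h hnP)
        have h1 := key3 j hj (n + m) (N.add_mem hn hmN) hnm
        have h2 := key3 j hj m hmN hm
        have : j • n = j • (n + m) - j • m := by rw [smul_add]; abel
        rw [this]
        exact Submodule.sub_mem _ h1 h2
      · exact key3 j hj n hn hnP
    exact hJNI (Submodule.smul_le.2 key)
  · intro h
    refine ⟨hproper, fun r m hrm hrmI => ?_⟩
    have hle : Ideal.span {r} • Submodule.span R {m} ≤ P := by
      refine Submodule.smul_le.2 fun j hj n hn => ?_
      obtain ⟨a, rfl⟩ := Ideal.mem_span_singleton'.mp hj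
      obtain ⟨b, rfl⟩ := Submodule.mem_span_singleton.mp hn
      have : (a * r) • (b • m) = (a * b) • (r • m) := by
        rw [smul_smul, smul_smul]; ring_nf
      rw [this]
      exact P.smul_mem _ hrm
    have hnle : ¬ Ideal.span {r} • Submodule.span R {m} ≤ I • P := fun hle' =>
      hrmI (hle' (Submodule.smul_mem_smul (Ideal.mem_span_singleton_self r)
        (Submodule.mem_span_singleton_self m)))
    rcases h _ _ hle hnle with h1 | h1
    · exact Or.inr (h1 (Ideal.mem_span_singleton_self r))
    · exact Or.inl (h1 (Submodule.mem_span_singleton_self m))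
end

section
/- Let R be a commutative ring, I an ideal of R, and M a finitely generated faithful multiplication R-module (i.e. M is finitely generated, has zero annihilator, and every submodule N of M satisfies N = (N : M)M). Let P be a proper submodule of M with (IP : M) = I(P : M). Then P is an I-primary submodule of M if and only if (P : M) is an I-primary ideal of R. -/
/-- `Q` is an `I`-primary ideal of `R`: `Q` is proper and whenever
`a * b ∈ Q \ I * Q`, either `a ∈ Q` or `b ∈ √Q`. -/
def IsIPrimaryIdeal {R : Type*} [CommRing R] (I Q : Ideal R) : Prop :=
  Q ≠ ⊤ ∧ ∀ a b : R, a * b ∈ Q → a * b ∉ I * Q →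
    a ∈ Q ∨ b ∈ Q.radical

theorem stmt11 {R : Type*} [CommRing R] {M : Type*} [AddCommGroup M] [Module R M]
    (I : Ideal R) (P : Submodule R M)
    (hfg : Module.Finite R M)
    (hfaithful : (⊤ : Submodule R M).annihilator = ⊥)
    (hmult : ∀ N : Submodule R M, (N.colon ⊤) • (⊤ : Submodule R M) = N)
    (hproper : P ≠ ⊤)
    (hIP : (I • P).colon ⊤ = I * (P.colon ⊤)) :
    IsIPrimary I P ↔ IsIPrimaryIdeal I (P.colon ⊤) := by
  constructor
  · rintro ⟨hP, hprim⟩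
    refine ⟨?_, ?_⟩
    · intro h
      apply hproper
      have := hmult P
      rw [h, Submodule.top_smul] at this
      exact this.symm
    · intro a b hab hab'
      by_cases hb : b ∈ (P.colon ⊤).radical
      · exact Or.inr hb
      left
      rw [← hIP, Submodule.mem_colon] at hab'
      push_neg at hab'
      obtain ⟨m0, -, hm0⟩ := hab'
      have key : ∀ m : M, (a * b) • m ∉ I • P → a • m ∈ P := by
        intro m hm
        have h1 : (a * b) • m ∈ P := Submodule.mem_colon.mp hab m trivial
        have h2 : b • (a • m) ∈ P := by rw [← mul_smul, mul_comm]; exact h1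
        have h3 : b • (a • m) ∉ I • P := by rw [← mul_smul, mul_comm]; exact hm
        rcases hprim b (a • m) h2 h3 with h | h
        · exact h
        · exact absurd h hb
      rw [Submodule.mem_colon]
      intro m _
      by_cases hm : (a * b) • m ∈ I • P
      · have h0 : a • m0 ∈ P := key m0 hm0
        have hsum : (a * b) • (m + m0) ∉ I • P := by
          intro h
          rw [smul_add] at h
          exact hm0 (by simpa using Submodule.sub_mem _ h hm)
        have hk := key _ hsum
        rw [smul_add] at hk
        simpa using Submodule.sub_mem _ hk h0
      · exact key m hm
  · rintro ⟨hQ, hq⟩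
    refine ⟨hproper, ?_⟩
    intro r m hrm hrm'
    by_cases hr : r ∈ (P.colon ⊤).radical
    · exact Or.inr hr
    left
    set J := (Submodule.span R {m}).colon ⊤ with hJ
    have hN : J • (⊤ : Submodule R M) = Submodule.span R {m} := hmult _
    have hrJ : ∀ a ∈ J, r * a ∈ P.colon ⊤ := by
      intro a ha
      rw [Submodule.mem_colon]
      intro x _
      have hax : a • x ∈ Submodule.span R {m} := Submodule.mem_colon.mp ha x trivial
      obtain ⟨c, hc⟩ := Submodule.mem_span_singleton.mp hax
      rw [mul_smul, ← hc, smul_comm]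
      exact Submodule.smul_mem _ c hrm
    have hex : ∃ a0 ∈ J, r * a0 ∉ I * (P.colon ⊤) := by
      by_contra h
      push_neg at h
      apply hrm'
      have hmem : m ∈ J • (⊤ : Submodule R M) := hN ▸ Submodule.mem_span_singleton_self m
      have hall : ∀ x ∈ J • (⊤ : Submodule R M), r • x ∈ I • P := by
        intro x hx
        refine Submodule.smul_induction_on hx ?_ ?_
        · intro j hj y _
          rw [← mul_smul]
          have hrj : r * j ∈ (I • P).colon ⊤ := by rw [hIP]; exact h j hj
          exact Submodule.mem_colon.mp hrj y trivial
        · intro x y hx hy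
          rw [smul_add]; exact Submodule.add_mem _ hx hy
      exact hall m hmem
    obtain ⟨a0, ha0J, ha0⟩ := hex
    have ha0Q : a0 ∈ P.colon ⊤ := by
      rcases hq a0 r (by rw [mul_comm]; exact hrJ a0 ha0J)
        (by rw [mul_comm a0 r]; exact ha0) with h | h
      · exact h
      · exact absurd h hr
    have hJQ : J ≤ P.colon ⊤ := by
      intro a ha
      by_cases hcase : r * a ∈ I * (P.colon ⊤)
      · have h1 : a + a0 ∈ J := J.add_mem ha ha0J
        have h2 : (a + a0) * r ∈ P.colon ⊤ := by
          rw [mul_comm]; exact hrJ _ h1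
        have h3 : (a + a0) * r ∉ I * (P.colon ⊤) := by
          rw [mul_comm (a+a0) r, mul_add]
          intro hc
          exact ha0 (by simpa using Ideal.sub_mem _ hc hcase)
        rcases hq (a + a0) r h2 h3 with h | h
        · simpa using Ideal.sub_mem _ h ha0Q
        · exact absurd h hr
      · rcases hq a r (by rw [mul_comm]; exact hrJ a ha) (by rw [mul_comm a r]; exact hcase)
          with h | h
        · exact h
        · exact absurd h hr
    have hfin : Submodule.span R {m} ≤ P := by
      rw [← hN, ← hmult P]
      exact Submodule.smul_mono_left hJQ
    exact hfin (Submodule.mem_span_singleton_self m)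
end

section
/- Let R be a commutative ring, M a faithful multiplication R-module (i.e. M has zero annihilator and every submodule N of M satisfies N = (N : M)M), P a submodule of M, and J a finitely generated faithful multiplication ideal of R. Then: (1) P = (JP : J), where (JP : J) = {m ∈ M : Jm ⊆ JP}; and (2) if P ⊆ JM, then (KP : J) = K(P : J) for every ideal K of R, where (N : J) = {m ∈ M : Jm ⊆ N}. -/
/-- For an ideal `J` of `R` and a submodule `N` of `M`, `(N : J)` is the
submodule `{m : M | ∀ a ∈ J, a • m ∈ N}`. -/
def colonIdeal {R : Type*} [CommRing R] {M : Type*} [AddCommGroup M] [Module R M]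
    (N : Submodule R M) (J : Ideal R) : Submodule R M where
  carrier := {m : M | ∀ a ∈ J, a • m ∈ N}
  add_mem' := fun ha hb a haJ => by
    rw [smul_add]; exact N.add_mem (ha a haJ) (hb a haJ)
  zero_mem' := fun a _ => by rw [smul_zero]; exact N.zero_mem
  smul_mem' := fun r m hm a haJ => by
    rw [smul_comm]; exact N.smul_mem r (hm a haJ)

section Aux

variable {R : Type*} [CommRing R] {M : Type*} [AddCommGroup M] [Module R M]

lemma mem_colonIdeal {N : Submodule R M} {J : Ideal R} {m : M} :
    m ∈ colonIdeal N J ↔ ∀ a ∈ J, a • m ∈ N := Iff.rfl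

lemma aux_mem_span_singleton_smul {a : R} {Y : Submodule R M} {w : M}
    (h : w ∈ Ideal.span {a} • Y) : ∃ y ∈ Y, w = a • y := by
  refine Submodule.smul_induction_on h ?_ ?_
  · intro r hr y hy
    obtain ⟨s, rfl⟩ := Ideal.mem_span_singleton'.mp hr
    exact ⟨s • y, Y.smul_mem s hy, by rw [mul_smul, smul_comm]⟩
  · rintro x y ⟨y1, hy1, rfl⟩ ⟨y2, hy2, rfl⟩
    exact ⟨y1 + y2, Y.add_mem hy1 hy2, by rw [smul_add]⟩

lemma aux_smul_mem_span_smul {J : Ideal R} {a c : R}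
    (hc : ∀ b ∈ J, c * b ∈ Ideal.span {a}) {Y : Submodule R M} {w : M}
    (hw : w ∈ J • Y) : c • w ∈ Ideal.span ({a} : Set R) • Y := by
  refine Submodule.smul_induction_on hw ?_ ?_
  · intro b hb y hy
    rw [smul_smul]
    exact Submodule.smul_mem_smul (hc b hb) hy
  · intro x y ihx ihy
    rw [smul_add]; exact Submodule.add_mem _ ihx ihy

/-- A finitely generated faithful multiplication ideal admits a "local generator" at
every maximal ideal. -/
lemma localGen {R : Type*} [CommRing R] (J : Ideal R) (hJfg : J.FG)
    (hJfaithful : (J : Submodule R R).annihilator = ⊥)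
    (hJmult : ∀ K : Ideal R, K ≤ J → ∃ C : Ideal R, K = C * J)
    (p : Ideal R) (hp : p.IsMaximal) :
    ∃ a ∈ J, ∃ c, c ∉ p ∧ ∀ b ∈ J, c * b ∈ Ideal.span {a} := by
  obtain ⟨s, hs⟩ := hJfg
  by_cases h : ∃ a ∈ s, ∃ C : Ideal R, Ideal.span {a} = C * J ∧ ¬C ≤ p
  · obtain ⟨a, haS, C, hC, hCp⟩ := h
    obtain ⟨c, hcC, hcp⟩ := Set.not_subset.mp hCp
    refine ⟨a, hs ▸ Ideal.subset_span haS, c, hcp, fun b hb => ?_⟩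
    rw [hC]
    exact Ideal.mul_mem_mul hcC hb
  · exfalso
    push_neg at h
    have hle : J ≤ p • J := by
      rw [← hs]
      rw [Ideal.span_le]
      intro a haS
      have haJ : Ideal.span {a} ≤ J := by
        rw [Ideal.span_singleton_le_iff_mem, ← hs]
        exact Ideal.subset_span haS
      obtain ⟨C, hC⟩ := hJmult _ haJ
      have hCp : C ≤ p := h a haS C hC
      have : a ∈ C * J := hC ▸ Ideal.mem_span_singleton_self a
      rw [Ideal.smul_eq_mul]
      rw [← hs] at this
      exact Ideal.mul_mono hCp le_rfl this
    obtain ⟨r, hr1, hr0⟩ :=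
      Submodule.exists_sub_one_mem_and_smul_eq_zero_of_fg_of_le_smul p J ⟨s, hs⟩ hle
    have : r ∈ (J : Submodule R R).annihilator := Submodule.mem_annihilator.mpr hr0
    rw [hJfaithful, Submodule.mem_bot] at this
    subst this
    rw [zero_sub] at hr1
    exact hp.ne_top (Ideal.eq_top_of_isUnit_mem p (p.neg_mem_iff.mp hr1) isUnit_one)

/-- For a faithful multiplication module `M` and a faithful ideal `J`,
`M` has no nonzero element annihilated by `J`. -/
lemma aux_torsionfree {J : Ideal R}
    (hMfaithful : (⊤ : Submodule R M).annihilator = ⊥)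
    (hMmult : ∀ N : Submodule R M, (N.colon ⊤) • (⊤ : Submodule R M) = N)
    (hJfaithful : (J : Submodule R R).annihilator = ⊥)
    {z : M} (hz : ∀ b ∈ J, b • z = 0) : z = 0 := by
  set T : Submodule R M := colonIdeal ⊥ J with hT
  have hzT : z ∈ T := fun b hb => by rw [Submodule.mem_bot]; exact hz b hb
  have hD : T.colon ⊤ = ⊥ := by
    rw [← hJfaithful]
    refine le_antisymm (fun d hd => ?_) (by rw [hJfaithful]; exact bot_le)
    rw [Submodule.mem_annihilator]
    intro b hb
    have hfb : ∀ m : M, (d * b) • m = 0 := by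
      intro m
      have hdm : d • m ∈ T := Submodule.mem_colon.mp hd m trivial
      have := hdm b hb
      rw [Submodule.mem_bot] at this
      rw [mul_comm, mul_smul, this]
    have : d * b ∈ (⊤ : Submodule R M).annihilator :=
      Submodule.mem_annihilator.mpr fun m _ => hfb m
    rw [hMfaithful, Submodule.mem_bot] at this
    simpa using this
  have : T = ⊥ := by rw [← hMmult T, hD, Submodule.bot_smul]
  rw [this, Submodule.mem_bot] at hzT
  exact hzT

/-- Cancellation: if `J • x ⊆ J • Y` then `x ∈ Y`. -/
lemma aux_cancel {J : Ideal R}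
    (hMfaithful : (⊤ : Submodule R M).annihilator = ⊥)
    (hMmult : ∀ N : Submodule R M, (N.colon ⊤) • (⊤ : Submodule R M) = N)
    (hJfg : J.FG)
    (hJfaithful : (J : Submodule R R).annihilator = ⊥)
    (hJmult : ∀ K : Ideal R, K ≤ J → ∃ C : Ideal R, K = C * J)
    (Y : Submodule R M) {x : M} (hx : ∀ b ∈ J, b • x ∈ J • Y) : x ∈ Y := by
  set I : Ideal R := Y.comap (LinearMap.toSpanSingleton R M x) with hI
  by_contra hxY
  have hInt : I ≠ ⊤ := by
    intro h
    have h1 : (1 : R) ∈ I := h.ge Submodule.mem_top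
    have := Submodule.mem_comap.mp h1
    rw [LinearMap.toSpanSingleton_apply, one_smul] at this
    exact hxY this
  obtain ⟨p, hpmax, hIp⟩ := Ideal.exists_le_maximal I hInt
  obtain ⟨a, haJ, c, hcp, hcJ⟩ := localGen J hJfg hJfaithful hJmult p hpmax
  have h1 : c • (a • x) ∈ Ideal.span ({a} : Set R) • Y :=
    aux_smul_mem_span_smul hcJ (hx a haJ)
  obtain ⟨y, hyY, hey⟩ := aux_mem_span_singleton_smul h1
  have hz : ∀ b ∈ J, b • (c • (c • x - y)) = 0 := by
    intro b hb
    obtain ⟨s, hs⟩ := Ideal.mem_span_singleton'.mp (hcJ b hb)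
    have key : a • (c • x - y) = 0 := by
      rw [smul_sub, smul_comm a c, ← hey, sub_self]
    rw [smul_comm b c, ← mul_smul, ← hs, mul_smul, key, smul_zero]
  have hcz : c • (c • x - y) = 0 :=
    aux_torsionfree hMfaithful hMmult hJfaithful hz
  have h2 : (c * c) • x ∈ Y := by
    have : (c * c) • x = c • y := by
      rw [smul_sub] at hcz
      rw [mul_smul]
      exact sub_eq_zero.mp hcz
    rw [this]
    exact Y.smul_mem c hyY
  have hccI : c * c ∈ I := h2
  have : c ∈ p := by
    rcases hpmax.isPrime.mem_or_mem (hIp hccI) with h | h <;> exact h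
  exact hcp this

/-- Half of the key identity: if `N ⊆ JM` then `N ⊆ J • (N : J)`. -/
lemma aux_le_smul_colon {J : Ideal R}
    (hJfg : J.FG)
    (hJfaithful : (J : Submodule R R).annihilator = ⊥)
    (hJmult : ∀ K : Ideal R, K ≤ J → ∃ C : Ideal R, K = C * J)
    (N : Submodule R M) (hN : N ≤ J • (⊤ : Submodule R M)) :
    N ≤ J • colonIdeal N J := by
  intro x hxN
  set I : Ideal R := (J • colonIdeal N J).comap (LinearMap.toSpanSingleton R M x) with hI
  by_contra hxY
  have hInt : I ≠ ⊤ := by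
    intro h
    have h1 : (1 : R) ∈ I := h.ge Submodule.mem_top
    have := Submodule.mem_comap.mp h1
    rw [LinearMap.toSpanSingleton_apply, one_smul] at this
    exact hxY this
  obtain ⟨p, hpmax, hIp⟩ := Ideal.exists_le_maximal I hInt
  obtain ⟨a, haJ, c, hcp, hcJ⟩ := localGen J hJfg hJfaithful hJmult p hpmax
  have h1 : c • x ∈ Ideal.span ({a} : Set R) • (⊤ : Submodule R M) :=
    aux_smul_mem_span_smul hcJ (hN hxN)
  obtain ⟨m', _, hem⟩ := aux_mem_span_singleton_smul h1
  have hm : c • m' ∈ colonIdeal N J := by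
    intro b hb
    obtain ⟨s, hs⟩ := Ideal.mem_span_singleton'.mp (hcJ b hb)
    have : b • (c • m') = s • (c • x) := by
      rw [smul_comm b c, ← mul_smul, ← hs, mul_smul, ← hem]
    rw [this]
    exact N.smul_mem s (N.smul_mem c hxN)
  have h2 : (c * c) • x ∈ J • colonIdeal N J := by
    have : (c * c) • x = a • (c • m') := by
      rw [mul_smul, hem, smul_comm a c]
    rw [this]
    exact Submodule.smul_mem_smul haJ hm
  have hccI : c * c ∈ I := h2
  have : c ∈ p := by
    rcases hpmax.isPrime.mem_or_mem (hIp hccI) with h | h <;> exact h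
  exact hcp this

lemma aux_smul_colon_le {J : Ideal R} (N : Submodule R M) :
    J • colonIdeal N J ≤ N :=
  Submodule.smul_le.mpr fun b hb m hm => hm b hb

end Aux

theorem stmt14 {R : Type*} [CommRing R] {M : Type*} [AddCommGroup M] [Module R M]
    (P : Submodule R M) (J : Ideal R)
    (hMfaithful : (⊤ : Submodule R M).annihilator = ⊥)
    (hMmult : ∀ N : Submodule R M, (N.colon ⊤) • (⊤ : Submodule R M) = N)
    (hJfg : J.FG)
    (hJfaithful : (J : Submodule R R).annihilator = ⊥)
    (hJmult : ∀ K : Ideal R, K ≤ J → ∃ C : Ideal R, K = C * J) :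
    colonIdeal (J • P) J = P ∧
      (P ≤ J • (⊤ : Submodule R M) →
        ∀ K : Ideal R, colonIdeal (K • P) J = K • colonIdeal P J) := by
  constructor
  · ext m
    constructor
    · intro hm
      exact aux_cancel hMfaithful hMmult hJfg hJfaithful hJmult P hm
    · intro hm b hb
      exact Submodule.smul_mem_smul hb hm
  · intro hP K
    have hJX : J • colonIdeal P J = P :=
      le_antisymm (aux_smul_colon_le P) (aux_le_smul_colon hJfg hJfaithful hJmult P hP)
    have hcomm : J • (K • colonIdeal P J) = K • P := by
      rw [← Submodule.smul_assoc, Ideal.smul_eq_mul, mul_comm, ← Ideal.smul_eq_mul,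
        Submodule.smul_assoc, hJX]
    apply le_antisymm
    · intro x hx
      refine aux_cancel hMfaithful hMmult hJfg hJfaithful hJmult (K • colonIdeal P J)
        (fun b hb => ?_)
      rw [hcomm]
      exact hx b hb
    · refine Submodule.smul_le.mpr fun k hk m hm => ?_
      intro b hb
      rw [smul_comm]
      exact Submodule.smul_mem_smul hk (hm b hb)
end

section
/- Let R be a commutative ring, M an R-module, P a submodule of M, r ∈ R, and F a flat R-module. Identifying F ⊗ N, for a submodule N of M, with its image in F ⊗ M under the map induced by the inclusion N → M, one has F ⊗ (P : r) = (F ⊗ P :_{F⊗M} r), where (P : r) = {m ∈ M : rm ∈ P} and (F ⊗ P :_{F⊗M} r) = {x ∈ F ⊗ M : rx ∈ F ⊗ P}. -/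
open TensorProduct

/-- The image of `F ⊗ N` in `F ⊗ M`, under the map induced by the inclusion `N → M`. -/
noncomputable def tensorImage {R : Type*} [CommRing R] {M : Type*} [AddCommGroup M] [Module R M]
    (F : Type*) [AddCommGroup F] [Module R F] (N : Submodule R M) :
    Submodule R (F ⊗[R] M) :=
  LinearMap.range (LinearMap.lTensor F N.subtype)

theorem stmt16 {R : Type*} [CommRing R] {M : Type*} [AddCommGroup M] [Module R M]
    (F : Type*) [AddCommGroup F] [Module R F] [Module.Flat R F]
    (P : Submodule R M) (r : R) :
    tensorImage F (P.comap (r • (LinearMap.id : M →ₗ[R] M))) =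
      (tensorImage F P).comap (r • (LinearMap.id : F ⊗[R] M →ₗ[R] F ⊗[R] M)) := by
  set f : M →ₗ[R] M := r • LinearMap.id
  set g : M →ₗ[R] M ⧸ P := P.mkQ ∘ₗ f
  have hker : LinearMap.ker g = P.comap f := by
    ext x; simp [g, LinearMap.mem_ker]
  -- F ⊗ (P : r) = ker (lTensor F g)
  have h1 : tensorImage F (P.comap f) = LinearMap.ker (LinearMap.lTensor F g) := by
    rw [← hker]
    have := Module.Flat.lTensor_exact F (LinearMap.exact_subtype_ker_map g)
    exact this.linearMap_ker_eq.symm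
  -- F ⊗ P = ker (lTensor F P.mkQ)
  have h2 : tensorImage F P = LinearMap.ker (LinearMap.lTensor F P.mkQ) := by
    have := Module.Flat.lTensor_exact F (LinearMap.exact_subtype_mkQ P)
    exact this.linearMap_ker_eq.symm
  have hcomp : LinearMap.lTensor F g =
      (LinearMap.lTensor F P.mkQ) ∘ₗ (r • (LinearMap.id : F ⊗[R] M →ₗ[R] F ⊗[R] M)) := by
    rw [show g = P.mkQ ∘ₗ f from rfl, LinearMap.lTensor_comp]
    congr 1
    rw [show f = r • LinearMap.id from rfl, LinearMap.lTensor_smul, LinearMap.lTensor_id]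
  rw [h1, h2, hcomp, LinearMap.ker_comp]
end

section
/- Let R be a commutative ring, I an ideal of R, M an R-module, P an I-primary submodule of M, and F a flat R-module such that F ⊗ P ≠ F ⊗ M (where F ⊗ P is identified with its image in F ⊗ M). Then F ⊗ P is an I-primary submodule of the R-module F ⊗ M. -/
open TensorProduct

section Aux

variable {R : Type*} [CommRing R] {M : Type*} [AddCommGroup M] [Module R M]
  (F : Type*) [AddCommGroup F] [Module R F]

/-- If `r • N ⊆ N'`, then `r • tensorImage F N ⊆ tensorImage F N'`. -/
lemma aux_smul_mem (r : R) {N N' : Submodule R M} (h : ∀ m ∈ N, r • m ∈ N')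
    {x : F ⊗[R] M} (hx : x ∈ tensorImage F N) : r • x ∈ tensorImage F N' := by
  obtain ⟨y, rfl⟩ := hx
  let g : N →ₗ[R] N' :=
    { toFun := fun n => ⟨r • (n : M), h n n.2⟩
      map_add' := fun a b => by ext; simp [smul_add]
      map_smul' := fun c a => by ext; simp [smul_comm r c] }
  have hcomp : N'.subtype ∘ₗ g = r • N.subtype := by ext n; rfl
  refine ⟨LinearMap.lTensor F g y, ?_⟩
  rw [← LinearMap.comp_apply, ← LinearMap.lTensor_comp, hcomp, LinearMap.lTensor_smul]
  rfl

lemma aux_mono {N N' : Submodule R M} (h : N ≤ N') :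
    tensorImage F N ≤ tensorImage F N' := by
  intro x hx
  have := aux_smul_mem F 1 (fun m hm => by simpa using h hm) hx
  simpa using this

lemma aux_mem_top (x : F ⊗[R] M) : x ∈ tensorImage F (⊤ : Submodule R M) := by
  have hs : Function.Surjective (Submodule.subtype (⊤ : Submodule R M)) :=
    fun m => ⟨⟨m, trivial⟩, rfl⟩
  exact LinearMap.lTensor_surjective F hs x

lemma aux_smul_le (I : Ideal R) (P : Submodule R M) :
    tensorImage F (I • P) ≤ I • tensorImage F P := by
  rintro _ ⟨y, rfl⟩
  induction y using TensorProduct.induction_on with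
  | zero => simp
  | tmul f z =>
      have key : ∀ w ∈ I • P, f ⊗ₜ[R] w ∈ I • tensorImage F P := by
        intro w hw
        refine Submodule.smul_induction_on hw (fun i hi n hn => ?_) (fun w1 w2 h1 h2 => ?_)
        · rw [tmul_smul]
          exact Submodule.smul_mem_smul hi ⟨f ⊗ₜ ⟨n, hn⟩, rfl⟩
        · rw [tmul_add]; exact add_mem h1 h2
      exact key z z.2
  | add a b ha hb => rw [map_add]; exact add_mem ha hb

lemma aux_ker [Module.Flat R F] {M' : Type*} [AddCommGroup M'] [Module R M']
    (φ : M →ₗ[R] M') :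
    tensorImage F (LinearMap.ker φ) = LinearMap.ker (LinearMap.lTensor F φ) :=
  (LinearMap.exact_iff.mp
    (Module.Flat.lTensor_exact F (LinearMap.exact_subtype_ker_map φ))).symm

end Aux

theorem stmt17 {R : Type*} [CommRing R] {M : Type*} [AddCommGroup M] [Module R M]
    (F : Type*) [AddCommGroup F] [Module R F] [Module.Flat R F]
    (I : Ideal R) (P : Submodule R M)
    (hP : IsIPrimary I P)
    (hproper : tensorImage F P ≠ ⊤) :
    IsIPrimary I (tensorImage F P) := by
  refine ⟨hproper, fun r x hx hnx => ?_⟩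
  by_cases hr : r ∈ (P.colon ⊤).radical
  · right
    refine Ideal.radical_mono (fun s hs => ?_) hr
    rw [Submodule.mem_colon] at hs ⊢
    intro z _
    exact aux_smul_mem F s (fun m _ => hs m trivial) (aux_mem_top F z)
  · left
    set φ : M →ₗ[R] M ⧸ P := P.mkQ ∘ₗ (r • LinearMap.id) with hφ
    have hT : tensorImage F P = LinearMap.ker (LinearMap.lTensor F P.mkQ) :=
      (LinearMap.exact_iff.mp
        (Module.Flat.lTensor_exact F (LinearMap.exact_subtype_mkQ P))).symm
    have hxK : x ∈ tensorImage F (LinearMap.ker φ) := by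
      rw [hT, LinearMap.mem_ker] at hx
      rw [aux_ker, LinearMap.mem_ker, hφ, LinearMap.lTensor_comp, LinearMap.comp_apply,
        LinearMap.lTensor_smul, LinearMap.lTensor_id]
      simpa using hx
    have hKP : ∀ m ∈ LinearMap.ker φ, r • m ∈ P := by
      intro m hm
      rw [LinearMap.mem_ker, hφ] at hm
      have : Submodule.Quotient.mk (r • m) = (0 : M ⧸ P) := hm
      exact (Submodule.Quotient.mk_eq_zero P).mp this
    by_cases hcase : LinearMap.ker φ ≤ (I • P).comap (r • (LinearMap.id : M →ₗ[R] M))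
    · exact absurd
        (aux_smul_le F I P (aux_smul_mem F r (fun m hm => by simpa using hcase hm) hxK)) hnx
    · have hle : LinearMap.ker φ ≤ P := by
        rw [SetLike.not_le_iff_exists] at hcase
        obtain ⟨a, haK, haI⟩ := hcase
        have haI' : r • a ∉ I • P := by simpa using haI
        have haP : a ∈ P := (hP.2 r a (hKP a haK) haI').resolve_right hr
        intro m hm
        by_contra hmP
        have hma : m + a ∈ LinearMap.ker φ := add_mem hm haK
        have hrm : r • m ∈ I • P := by
          by_contra h'
          exact hmP ((hP.2 r m (hKP m hm) h').resolve_right hr)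
        have hrma : r • (m + a) ∈ I • P := by
          by_contra h'
          have : m + a ∈ P := (hP.2 r (m + a) (hKP _ hma) h').resolve_right hr
          exact hmP (by simpa using sub_mem this haP)
        have : r • a ∈ I • P := by
          have := sub_mem hrma hrm
          simpa [smul_add] using this
        exact haI' this
      exact aux_mono F hle hxK
end

section
/- Let R be a commutative ring, I an ideal of R, M an R-module, P a submodule of M, and F a faithfully flat R-module. Then P is an I-primary submodule of M if and only if F ⊗ P (identified with its image in F ⊗ M) is an I-primary submodule of the R-module F ⊗ M. -/
open TensorProduct

section Aux

variable {R : Type*} [CommRing R] {M : Type*} [AddCommGroup M] [Module R M]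
  {F : Type*} [AddCommGroup F] [Module R F]

lemma tensorImage_eq_ker (N : Submodule R M) :
    tensorImage F N = LinearMap.ker (LinearMap.lTensor F N.mkQ) :=
  (lTensor_mkQ F N).symm

lemma tmul_mem_tensorImage {N : Submodule R M} (f : F) {m : M} (hm : m ∈ N) :
    f ⊗ₜ[R] m ∈ tensorImage F N :=
  ⟨f ⊗ₜ ⟨m, hm⟩, rfl⟩

lemma tmul_mem_tensorImage_iff (N : Submodule R M) (f : F) (m : M) :
    f ⊗ₜ[R] m ∈ tensorImage F N ↔ f ⊗ₜ[R] (N.mkQ m) = 0 := by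
  rw [tensorImage_eq_ker, LinearMap.mem_ker, LinearMap.lTensor_tmul]

lemma smul_tensorImage (I : Ideal R) (P : Submodule R M) :
    I • tensorImage F P = tensorImage F (I • P) := by
  apply le_antisymm
  · refine Submodule.smul_le.2 fun r hr x hx => ?_
    obtain ⟨y, rfl⟩ := hx
    induction y using TensorProduct.induction_on with
    | zero => simp
    | tmul f p =>
        rw [LinearMap.lTensor_tmul, ← tmul_smul]
        exact tmul_mem_tensorImage f (Submodule.smul_mem_smul hr p.2)
    | add a b ha hb =>
        rw [map_add, smul_add]
        exact (tensorImage F (I • P)).add_mem ha hb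
  · rintro x ⟨y, rfl⟩
    induction y using TensorProduct.induction_on with
    | zero => simp
    | tmul f q =>
        rw [LinearMap.lTensor_tmul, Submodule.coe_subtype]
        have haux : ∀ x ∈ I • P, f ⊗ₜ[R] x ∈ I • tensorImage F P := by
          intro x hx
          refine Submodule.smul_induction_on hx (fun r hr n hn => ?_)
            (fun a b ha hb => by rw [tmul_add]; exact add_mem ha hb)
          rw [tmul_smul]
          exact Submodule.smul_mem_smul hr (tmul_mem_tensorImage f hn)
        exact haux q.1 q.2
    | add a b ha hb =>
        rw [map_add]
        exact (I • tensorImage F P).add_mem ha hb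

lemma exists_tmul_ne_zero [Module.FaithfullyFlat R F] {Q : Type*} [AddCommGroup Q] [Module R Q]
    {x : Q} (hx : x ≠ 0) : ∃ f : F, f ⊗ₜ[R] x ≠ 0 := by
  by_contra h
  push_neg at h
  apply hx
  set N : Submodule R Q := Submodule.span R {x} with hN
  have hinj : Function.Injective (LinearMap.lTensor F N.subtype) :=
    Module.Flat.lTensor_preserves_injective_linearMap _ N.injective_subtype
  have hzero : ∀ z : F ⊗[R] N, LinearMap.lTensor F N.subtype z = 0 := by
    intro z
    induction z using TensorProduct.induction_on with
    | zero => simp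
    | tmul f n =>
        obtain ⟨a, ha⟩ := Submodule.mem_span_singleton.1 n.2
        rw [LinearMap.lTensor_tmul, Submodule.coe_subtype, ← ha, tmul_smul, h, smul_zero]
    | add a b ha hb => rw [map_add, ha, hb, add_zero]
  have : Subsingleton (F ⊗[R] N) :=
    ⟨fun a b => hinj (by rw [hzero a, hzero b])⟩
  have : Subsingleton N := Module.FaithfullyFlat.lTensor_reflects_triviality R F N
  have hx' : (⟨x, Submodule.mem_span_singleton_self x⟩ : N) = 0 := Subsingleton.elim _ _
  exact congrArg Subtype.val hx'

lemma colon_tensorImage [Module.FaithfullyFlat R F] (P : Submodule R M) :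
    (tensorImage F P).colon ⊤ = P.colon ⊤ := by
  ext r
  simp only [Submodule.mem_colon]
  constructor
  · intro h m _
    by_contra hrm
    have hx : P.mkQ (r • m) ≠ 0 := by
      rw [Submodule.mkQ_apply, ne_eq, Submodule.Quotient.mk_eq_zero]
      exact hrm
    obtain ⟨f, hf⟩ := exists_tmul_ne_zero (R := R) (F := F) hx
    have := h (f ⊗ₜ[R] m) trivial
    rw [← tmul_smul, tmul_mem_tensorImage_iff] at this
    exact hf this
  · intro h z hz
    clear hz
    induction z using TensorProduct.induction_on with
    | zero => simp
    | tmul f m =>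
        rw [← tmul_smul]
        exact tmul_mem_tensorImage f (h m trivial)
    | add a b ha hb =>
        rw [smul_add]
        exact (tensorImage F P).add_mem ha hb

lemma lTensor_eq_zero_of_ker_le [Module.Flat R F] {X Y : Type*} [AddCommGroup X] [Module R X]
    [AddCommGroup Y] [Module R Y] (g' : M →ₗ[R] Y) (g : M →ₗ[R] X)
    (hle : LinearMap.ker g' ≤ LinearMap.ker g) {z : F ⊗[R] M}
    (hz : LinearMap.lTensor F g' z = 0) : LinearMap.lTensor F g z = 0 := by
  set K := LinearMap.ker g' with hK
  have h1 : g = (K.liftQ g hle).comp K.mkQ := (K.liftQ_mkQ g hle).symm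
  have h2 : g' = (K.liftQ g' le_rfl).comp K.mkQ := (K.liftQ_mkQ g' le_rfl).symm
  have hinj : Function.Injective (K.liftQ g' le_rfl) := by
    rw [← LinearMap.ker_eq_bot]
    exact Submodule.ker_liftQ_eq_bot K g' le_rfl le_rfl
  have hmkQ : LinearMap.lTensor F K.mkQ z = 0 := by
    rw [h2, LinearMap.lTensor_comp, LinearMap.comp_apply] at hz
    exact Module.Flat.lTensor_preserves_injective_linearMap _ hinj
      (by rw [hz, map_zero])
  rw [h1, LinearMap.lTensor_comp, LinearMap.comp_apply, hmkQ, map_zero]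

lemma lTensor_smul_mkQ [Module.Flat R F] (N : Submodule R M) (r : R) (z : F ⊗[R] M) :
    LinearMap.lTensor F (N.mkQ.comp (r • (LinearMap.id : M →ₗ[R] M))) z
      = LinearMap.lTensor F N.mkQ (r • z) := by
  rw [LinearMap.lTensor_comp, LinearMap.comp_apply, LinearMap.lTensor_smul,
    LinearMap.lTensor_id, LinearMap.smul_apply, LinearMap.id_apply, map_smul]

lemma ker_smul_mkQ (N : Submodule R M) (r : R) :
    LinearMap.ker (N.mkQ.comp (r • (LinearMap.id : M →ₗ[R] M)))
      = N.comap (r • (LinearMap.id : M →ₗ[R] M)) := by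
  ext m
  rw [LinearMap.mem_ker, LinearMap.comp_apply, Submodule.mem_comap, Submodule.mkQ_apply,
    Submodule.Quotient.mk_eq_zero]

end Aux

theorem stmt18 {R : Type*} [CommRing R] {M : Type*} [AddCommGroup M] [Module R M]
    (F : Type*) [AddCommGroup F] [Module R F] [Module.FaithfullyFlat R F]
    (I : Ideal R) (P : Submodule R M) :
    IsIPrimary I P ↔ IsIPrimary I (tensorImage F P) := by
  constructor
  · rintro ⟨hPtop, hP⟩
    constructor
    · intro htop
      apply hPtop
      have h0 : LinearMap.lTensor F P.mkQ = 0 := by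
        rw [← LinearMap.ker_eq_top, ← tensorImage_eq_ker, htop]
      have : P.mkQ = 0 := (Module.FaithfullyFlat.zero_iff_lTensor_zero R F P.mkQ).2 h0
      rw [eq_top_iff]
      intro m _
      rw [← Submodule.Quotient.mk_eq_zero, ← Submodule.mkQ_apply, this]
      rfl
    · intro r z hz1 hz2
      rw [colon_tensorImage]
      by_cases hr : r ∈ (P.colon ⊤).radical
      · exact Or.inr hr
      refine Or.inl ?_
      set Q : Submodule R M := P.comap (r • (LinearMap.id : M →ₗ[R] M)) with hQdef
      set Q' : Submodule R M := (I • P).comap (r • (LinearMap.id : M →ₗ[R] M)) with hQ'def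
      have hmemQ : ∀ m : M, m ∈ Q ↔ r • m ∈ P := by
        intro m; rw [hQdef, Submodule.mem_comap]; simp
      have hmemQ' : ∀ m : M, m ∈ Q' ↔ r • m ∈ I • P := by
        intro m; rw [hQ'def, Submodule.mem_comap]; simp
      have hQ : ∀ m ∈ Q, m ∈ Q' ∨ m ∈ P := by
        intro m hm
        by_cases h : r • m ∈ I • P
        · exact Or.inl ((hmemQ' m).2 h)
        · exact Or.inr (((hP r m ((hmemQ m).1 hm) h).resolve_right hr))
      have hdich : Q ≤ P ∨ Q ≤ Q' := by
        by_contra hc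
        push_neg at hc
        obtain ⟨hc1, hc2⟩ := hc
        obtain ⟨a, haQ, haP⟩ := SetLike.not_le_iff_exists.1 hc1
        obtain ⟨b, hbQ, hbQ'⟩ := SetLike.not_le_iff_exists.1 hc2
        have haQ' : a ∈ Q' := (hQ a haQ).resolve_right haP
        have hbP : b ∈ P := (hQ b hbQ).resolve_left hbQ'
        rcases hQ (a + b) (Q.add_mem haQ hbQ) with h | h
        · exact hbQ' (by simpa using Q'.sub_mem h haQ')
        · exact haP (by simpa using P.sub_mem h hbP)
      have hz1' : LinearMap.lTensor F P.mkQ (r • z) = 0 := by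
        rw [tensorImage_eq_ker] at hz1
        exact hz1
      have hg' : LinearMap.lTensor F (P.mkQ.comp (r • (LinearMap.id : M →ₗ[R] M))) z = 0 := by
        rw [lTensor_smul_mkQ]; exact hz1'
      rcases hdich with hle | hle
      · have : LinearMap.lTensor F P.mkQ z = 0 := by
          refine lTensor_eq_zero_of_ker_le _ _ ?_ hg'
          rw [ker_smul_mkQ, ← hQdef, Submodule.ker_mkQ]
          exact hle
        rw [tensorImage_eq_ker]
        exact this
      · exfalso
        apply hz2
        have : LinearMap.lTensor F ((I • P).mkQ.comp (r • (LinearMap.id : M →ₗ[R] M))) z = 0 := by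
          refine lTensor_eq_zero_of_ker_le _ _ ?_ hg'
          rw [ker_smul_mkQ, ker_smul_mkQ, ← hQdef, ← hQ'def]
          exact hle
        rw [lTensor_smul_mkQ] at this
        rw [smul_tensorImage, tensorImage_eq_ker]
        exact this
  · rintro ⟨hTtop, hT⟩
    constructor
    · rintro rfl
      apply hTtop
      rw [eq_top_iff]
      rintro z -
      induction z using TensorProduct.induction_on with
      | zero => exact (tensorImage F (⊤ : Submodule R M)).zero_mem
      | tmul f m => exact tmul_mem_tensorImage f trivial
      | add a b ha hb => exact (tensorImage F (⊤ : Submodule R M)).add_mem ha hb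
    · intro r m hm1 hm2
      by_contra hc
      push_neg at hc
      obtain ⟨hmP, hr⟩ := hc
      set x1 := (I • P).mkQ (r • m) with hx1def
      set x2 := P.mkQ m with hx2def
      have hx1 : x1 ≠ 0 := by
        rw [hx1def, Submodule.mkQ_apply, ne_eq, Submodule.Quotient.mk_eq_zero]
        exact hm2
      have hx2 : x2 ≠ 0 := by
        rw [hx2def, Submodule.mkQ_apply, ne_eq, Submodule.Quotient.mk_eq_zero]
        exact hmP
      have key : ∀ f : F, f ⊗ₜ[R] x1 = 0 ∨ f ⊗ₜ[R] x2 = 0 := by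
        intro f
        by_cases h1 : f ⊗ₜ[R] x1 = 0
        · exact Or.inl h1
        refine Or.inr ?_
        have hmem : r • (f ⊗ₜ[R] m) ∈ tensorImage F P := by
          rw [← tmul_smul]
          exact tmul_mem_tensorImage f hm1
        have hnot : r • (f ⊗ₜ[R] m) ∉ I • tensorImage F P := by
          rw [smul_tensorImage, ← tmul_smul, tmul_mem_tensorImage_iff]
          exact h1
        rcases hT r (f ⊗ₜ[R] m) hmem hnot with h | h
        · exact (tmul_mem_tensorImage_iff P f m).1 h
        · rw [colon_tensorImage] at h
          exact absurd h hr
      obtain ⟨f1, hf1⟩ := exists_tmul_ne_zero (R := R) (F := F) hx1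
      obtain ⟨f2, hf2⟩ := exists_tmul_ne_zero (R := R) (F := F) hx2
      have h12 : f1 ⊗ₜ[R] x2 = 0 := (key f1).resolve_left hf1
      have h21 : f2 ⊗ₜ[R] x1 = 0 := (key f2).resolve_right hf2
      rcases key (f1 + f2) with h | h
      · rw [add_tmul, h21, add_zero] at h
        exact hf1 h
      · rw [add_tmul, h12, zero_add] at h
        exact hf2 h
end

section
/- Let R be a commutative ring, I an ideal of R, M an R-module, and x an indeterminate. If P is an I-primary submodule of M, then P[x] is an I-primary submodule of the R-module M[x], where M[x] denotes the polynomial module (elements are polynomials in x with coefficients in M) and P[x] is the submodule of M[x] consisting of those polynomials all of whose coefficients lie in P. -/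
/-- `P[x]`: the submodule of the polynomial module `M[x]` consisting of those
polynomials all of whose coefficients lie in `P`. -/
noncomputable def polySubmodule {R : Type*} [CommRing R] {M : Type*} [AddCommGroup M]
    [Module R M] (P : Submodule R M) : Submodule R (PolynomialModule R M) where
  carrier := {f : PolynomialModule R M | ∀ i : ℕ, f.coeff i ∈ P}
  add_mem' := fun {f g} hf hg i => by
    show (f.coeff + g.coeff) i ∈ P
    rw [Finsupp.add_apply]
    exact P.add_mem (hf i) (hg i)
  zero_mem' := fun i => by
    show (0 : ℕ →₀ M) i ∈ P
    simp only [Finsupp.coe_zero, Pi.zero_apply]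
    exact P.zero_mem
  smul_mem' := fun r f hf i => by
    show (r • f.coeff : ℕ →₀ M) i ∈ P
    rw [Finsupp.smul_apply]
    exact P.smul_mem r (hf i)

/-- A polynomial with a single coefficient in `P` lies in `P[x]`. -/
lemma single_mem_polySubmodule {R : Type*} [CommRing R] {M : Type*} [AddCommGroup M]
    [Module R M] {P : Submodule R M} {m : M} (hm : m ∈ P) (i : ℕ) :
    (PolynomialModule.single R i m) ∈ polySubmodule P := by
  intro j
  show (Finsupp.single i m : ℕ →₀ M) j ∈ P
  rcases eq_or_ne i j with rfl | h
  · rwa [Finsupp.single_eq_same]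
  · rw [Finsupp.single_eq_of_ne' h]; exact P.zero_mem

/-- A polynomial with a single coefficient in `I • P` lies in `I • P[x]`. -/
lemma single_mem_smul {R : Type*} [CommRing R] {M : Type*} [AddCommGroup M] [Module R M]
    {I : Ideal R} {P : Submodule R M} {m : M} (hm : m ∈ I • P) (i : ℕ) :
    (PolynomialModule.single R i m) ∈ I • polySubmodule P := by
  refine Submodule.smul_induction_on hm ?_ ?_
  · intro a ha p hp
    have : (PolynomialModule.single R i (a • p))
        = a • (PolynomialModule.single R i p) := by
      exact PolynomialModule.single_smul (i := i) (r := a) (m := p)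
    rw [this]
    exact Submodule.smul_mem_smul ha (single_mem_polySubmodule hp i)
  · intro x y hx hy
    have : (PolynomialModule.single R i (x + y))
        = PolynomialModule.single R i x + PolynomialModule.single R i y := by
      rw [PolynomialModule.single_add]
    rw [this]
    exact Submodule.add_mem _ hx hy

/-- A polynomial all of whose coefficients lie in `I • P` lies in `I • P[x]`. -/
lemma coeffs_mem_smul {R : Type*} [CommRing R] {M : Type*} [AddCommGroup M] [Module R M]
    {I : Ideal R} {P : Submodule R M} {g : PolynomialModule R M}
    (h : ∀ j : ℕ, g.coeff j ∈ I • P) : g ∈ I • polySubmodule P := by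
  have hg : g = ∑ j ∈ g.coeff.support, (PolynomialModule.single R j (g.coeff j)) := by
    ext1
    rw [PolynomialModule.coeff_sum]
    simp only [PolynomialModule.coeff_single]
    exact (Finsupp.sum_single g.coeff).symm
  rw [hg]
  exact Submodule.sum_mem _ fun j _ => single_mem_smul (h j) j

theorem stmt19 {R : Type*} [CommRing R] {M : Type*} [AddCommGroup M] [Module R M]
    (I : Ideal R) (P : Submodule R M)
    (hP : IsIPrimary I P) :
    IsIPrimary I (polySubmodule P) := by
  obtain ⟨hne, hprim⟩ := hP
  constructor
  · -- `P[x] ≠ ⊤` since `P ≠ ⊤`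
    intro h
    apply hne
    rw [Submodule.eq_top_iff']
    intro m
    have hm : (PolynomialModule.single R 0 m) ∈ polySubmodule P := by
      rw [h]; exact Submodule.mem_top
    have := hm 0
    rwa [PolynomialModule.coeff_single, Finsupp.single_eq_same] at this
  · intro r f hrf hnot
    have hcoef : ∀ j : ℕ, r • f.coeff j ∈ P := by
      intro j
      have := hrf j
      rwa [show (r • f).coeff j = r • f.coeff j from Finsupp.smul_apply r f.coeff j] at this
    by_cases hr : r ∈ (P.colon ⊤).radical
    · right
      refine Ideal.radical_mono ?_ hr
      intro s hs
      rw [Submodule.mem_colon] at hs ⊢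
      intro g _
      intro j
      rw [show (s • g).coeff j = s • g.coeff j from Finsupp.smul_apply s g.coeff j]
      exact hs (g.coeff j) trivial
    · left
      intro i
      by_contra hfi
      apply hnot
      -- any coefficient not in `P` forces `r • (that coefficient) ∈ I • P`
      have hnP : ∀ j : ℕ, f.coeff j ∉ P → r • f.coeff j ∈ I • P := by
        intro j hfj
        by_contra hnIP
        rcases hprim r (f.coeff j) (hcoef j) hnIP with h | h
        · exact hfj h
        · exact hr h
      have hri : r • f.coeff i ∈ I • P := hnP i hfi
      -- every coefficient of `r • f` lies in `I • P`
      have key : ∀ j : ℕ, r • f.coeff j ∈ I • P := by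
        intro j
        by_cases hfj : f.coeff j ∈ P
        · have h2 : f.coeff i + f.coeff j ∉ P := fun h => hfi (by simpa using P.sub_mem h hfj)
          by_cases h3 : r • (f.coeff i + f.coeff j) ∈ I • P
          · have : r • f.coeff j = r • (f.coeff i + f.coeff j) - r • f.coeff i := by
              rw [smul_add]; abel
            rw [this]
            exact Submodule.sub_mem _ h3 hri
          · have h1 : r • (f.coeff i + f.coeff j) ∈ P := by
              rw [smul_add]; exact P.add_mem (hcoef i) (hcoef j)
            rcases hprim r (f.coeff i + f.coeff j) h1 h3 with h | h
            · exact absurd h h2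
            · exact absurd h hr
        · exact hnP j hfj
      refine coeffs_mem_smul fun j => ?_
      rw [show (r • f).coeff j = r • f.coeff j from Finsupp.smul_apply r f.coeff j]
      exact key j
end
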